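/- Let K be a groupal category. Then every subgroup of the object group of K, acting on K by the right-associative action, is right-normal on the category K. In particular, every subgroup of a po-group acts right-normally on the po-group viewed as a category. -/

import Mathlib

set_option linter.unusedVariables false

/-- A small category, presented as a directed graph with a partial composition
that is defined exactly on composable pairs of arrows. -/
structure SmallCat where
  Obj : Type
  Arr : Type
  src : Arr → Obj
  tgt : Arr → Obj
  id : Obj → Arr
  src_id : ∀ x, src (id x) = x
  tgt_id : ∀ x, tgt (id x) = x
  comp : ∀ a b, tgt a = src b → Arr
  src_comp : ∀ a b h, src (comp a b h) = src a
  tgt_comp : ∀ a b h, tgt (comp a b h) = tgt b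
  id_comp : ∀ a, comp (id (src a)) a (tgt_id (src a)) = a
  comp_id : ∀ a, comp a (id (tgt a)) ((src_id (tgt a)).symm) = a
  assoc : ∀ a b c (hab : tgt a = src b) (hbc : tgt b = src c),
    comp (comp a b hab) c (by rw [tgt_comp]; exact hbc) =
    comp a (comp b c hbc) (by rw [src_comp]; exact hab)

/-- An action of a group `G` on a small category `K` by category automorphisms,
written exponentially (left-associative: `a^(g*h) = (a^g)^h`). -/
structure CatAction (G : Type) [Group G] (K : SmallCat) where
  onObj : G → K.Obj → K.Obj
  onArr : G → K.Arr → K.Arr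
  onObj_one : ∀ x, onObj 1 x = x
  onObj_mul : ∀ g h x, onObj (g * h) x = onObj h (onObj g x)
  onArr_one : ∀ a, onArr 1 a = a
  onArr_mul : ∀ g h a, onArr (g * h) a = onArr h (onArr g a)
  src_onArr : ∀ g a, K.src (onArr g a) = onObj g (K.src a)
  tgt_onArr : ∀ g a, K.tgt (onArr g a) = onObj g (K.tgt a)
  onArr_id : ∀ g x, onArr g (K.id x) = K.id (onObj g x)
  onArr_comp : ∀ g a b (h : K.tgt a = K.src b),
    onArr g (K.comp a b h) = K.comp (onArr g a) (onArr g b)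
      (by rw [tgt_onArr, src_onArr, h])

/-- The action is semi-regular: only the unit fixes an object or an arrow. -/
def SemiRegular {G : Type} [Group G] {K : SmallCat} (ρ : CatAction G K) : Prop :=
  (∀ g x, ρ.onObj g x = x → g = 1) ∧ (∀ g a, ρ.onArr g a = a → g = 1)

/-- Orbit of an object. -/
def orbitO {G : Type} [Group G] {K : SmallCat} (ρ : CatAction G K) (x : K.Obj) : Set K.Obj :=
  {y | ∃ g : G, ρ.onObj g x = y}

/-- The arrows of the full subcategory generated by the orbit of `x`. -/
def orbitA {G : Type} [Group G] {K : SmallCat} (ρ : CatAction G K) (x : K.Obj) : Set K.Arr :=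
  {a | K.src a ∈ orbitO ρ x ∧ K.tgt a ∈ orbitO ρ x}

/-- The setoid of object orbits. -/
def objSetoid {G : Type} [Group G] {K : SmallCat} (ρ : CatAction G K) : Setoid K.Obj where
  r x y := ∃ g : G, ρ.onObj g x = y
  iseqv := by
    constructor
    · exact fun x => ⟨1, ρ.onObj_one x⟩
    · rintro x y ⟨g, rfl⟩
      exact ⟨g⁻¹, by rw [← ρ.onObj_mul, mul_inv_cancel, ρ.onObj_one]⟩
    · rintro x y z ⟨g, rfl⟩ ⟨h, rfl⟩
      exact ⟨g * h, by rw [ρ.onObj_mul]⟩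

/-- The setoid of arrow orbits. -/
def arrSetoid {G : Type} [Group G] {K : SmallCat} (ρ : CatAction G K) : Setoid K.Arr where
  r a b := ∃ g : G, ρ.onArr g a = b
  iseqv := by
    constructor
    · exact fun a => ⟨1, ρ.onArr_one a⟩
    · rintro a b ⟨g, rfl⟩
      exact ⟨g⁻¹, by rw [← ρ.onArr_mul, mul_inv_cancel, ρ.onArr_one]⟩
    · rintro a b c ⟨g, rfl⟩ ⟨h, rfl⟩
      exact ⟨g * h, by rw [ρ.onArr_mul]⟩

/-- The source of an arrow orbit. -/
def srcQ {G : Type} [Group G] {K : SmallCat} (ρ : CatAction G K) :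
    Quotient (arrSetoid ρ) → Quotient (objSetoid ρ) :=
  Quotient.lift (fun a => Quotient.mk (objSetoid ρ) (K.src a)) (by
    rintro a b ⟨g, rfl⟩
    exact Quotient.sound ⟨g, (ρ.src_onArr g a).symm⟩)

/-- The target of an arrow orbit. -/
def tgtQ {G : Type} [Group G] {K : SmallCat} (ρ : CatAction G K) :
    Quotient (arrSetoid ρ) → Quotient (objSetoid ρ) :=
  Quotient.lift (fun a => Quotient.mk (objSetoid ρ) (K.tgt a)) (by
    rintro a b ⟨g, rfl⟩
    exact Quotient.sound ⟨g, (ρ.tgt_onArr g a).symm⟩)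

/-- The identity arrow orbit of an object orbit. -/
def idQ {G : Type} [Group G] {K : SmallCat} (ρ : CatAction G K) :
    Quotient (objSetoid ρ) → Quotient (arrSetoid ρ) :=
  Quotient.lift (fun x => Quotient.mk (arrSetoid ρ) (K.id x)) (by
    rintro x y ⟨g, rfl⟩
    exact Quotient.sound ⟨g, ρ.onArr_id g x⟩)

/-- `CompRelQ ρ α β γ` expresses that in the orbit category the composite of the
arrow orbits `α` and `β` is `γ`, i.e. that `γ` is the orbit of a composite of
composable representatives of `α` and `β`. -/
def CompRelQ {G : Type} [Group G] {K : SmallCat} (ρ : CatAction G K)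
    (α β γ : Quotient (arrSetoid ρ)) : Prop :=
  ∃ (a b : K.Arr) (h : K.tgt a = K.src b),
    Quotient.mk (arrSetoid ρ) a = α ∧ Quotient.mk (arrSetoid ρ) b = β ∧
    Quotient.mk (arrSetoid ρ) (K.comp a b h) = γ

/-- An annotation: a contravariant homomorphism from a small category into a group. -/
structure Annotation (K : SmallCat) (G : Type) [Group G] where
  map : K.Arr → G
  map_id : ∀ x, map (K.id x) = 1
  map_comp : ∀ a b (h : K.tgt a = K.src b), map (K.comp a b h) = map b * map a

/-- The partial operation `⊙` of a representation `(K, A, G)`. -/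
def odot {G : Type} [Group G] {K : SmallCat} (A : Annotation K G) (p q : K.Arr × G)
    (h : K.tgt p.1 = K.src q.1) (_ : q.2 = A.map p.1 * p.2) : K.Arr × G :=
  (K.comp p.1 q.1 h, p.2)

/-- The unfolding `E(K,A,G)` of a representation `(K,A,G)`. -/
def Unfolding (K : SmallCat) {G : Type} [Group G] (A : Annotation K G) : SmallCat where
  Obj := K.Obj × G
  Arr := K.Arr × G
  src p := (K.src p.1, p.2)
  tgt p := (K.tgt p.1, A.map p.1 * p.2)
  id x := (K.id x.1, x.2)
  src_id x := by simp [K.src_id]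
  tgt_id x := by simp [K.tgt_id, A.map_id]
  comp p q h := (K.comp p.1 q.1 (congrArg Prod.fst h), p.2)
  src_comp p q h := by simp [K.src_comp]
  tgt_comp p q h := by
    have h2 : A.map p.1 * p.2 = q.2 := congrArg Prod.snd h
    simp [K.tgt_comp, A.map_comp, mul_assoc, h2]
  id_comp p := by
    refine Prod.ext ?_ rfl
    exact K.id_comp p.1
  comp_id p := by
    refine Prod.ext ?_ rfl
    exact K.comp_id p.1
  assoc p q s hpq hqs := by
    refine Prod.ext ?_ rfl
    exact K.assoc p.1 q.1 s.1 (congrArg Prod.fst hpq) (congrArg Prod.fst hqs)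

/-- A homomorphism (functor) between small categories. -/
structure CatHom (K L : SmallCat) where
  onObj : K.Obj → L.Obj
  onArr : K.Arr → L.Arr
  src_onArr : ∀ a, L.src (onArr a) = onObj (K.src a)
  tgt_onArr : ∀ a, L.tgt (onArr a) = onObj (K.tgt a)
  onArr_id : ∀ x, onArr (K.id x) = L.id (onObj x)
  onArr_comp : ∀ a b (h : K.tgt a = K.src b),
    onArr (K.comp a b h) = L.comp (onArr a) (onArr b)
      (by rw [tgt_onArr, src_onArr, h])

/-- A functor is full. -/
def IsFull {K L : SmallCat} (F : CatHom K L) : Prop :=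
  ∀ (x y : K.Obj) (b : L.Arr), L.src b = F.onObj x → L.tgt b = F.onObj y →
    ∃ a : K.Arr, K.src a = x ∧ K.tgt a = y ∧ F.onArr a = b

/-- A functor is faithful. -/
def IsFaithful {K L : SmallCat} (F : CatHom K L) : Prop :=
  ∀ a a' : K.Arr, K.src a = K.src a' → K.tgt a = K.tgt a' → F.onArr a = F.onArr a' → a = a'

/-- A translative automorphism group action: semi-regular, and any two orbits
generate isomorphic full subcategories, by an isomorphism commuting with the action. -/
def Translative {G : Type} [Group G] {K : SmallCat} (ρ : CatAction G K) : Prop :=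
  SemiRegular ρ ∧
  ∀ a b : K.Obj, ∃ (φo : K.Obj → K.Obj) (φa : K.Arr → K.Arr),
    Set.BijOn φo (orbitO ρ a) (orbitO ρ b) ∧
    Set.BijOn φa (orbitA ρ a) (orbitA ρ b) ∧
    (∀ f ∈ orbitA ρ a, K.src (φa f) = φo (K.src f)) ∧
    (∀ f ∈ orbitA ρ a, K.tgt (φa f) = φo (K.tgt f)) ∧
    (∀ x ∈ orbitO ρ a, φa (K.id x) = K.id (φo x)) ∧
    (∀ (f f' : K.Arr) (h : K.tgt f = K.src f'), f ∈ orbitA ρ a → f' ∈ orbitA ρ a →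
      ∀ h', φa (K.comp f f' h) = K.comp (φa f) (φa f') h') ∧
    (∀ (g : G), ∀ x ∈ orbitO ρ a, φo (ρ.onObj g x) = ρ.onObj g (φo x)) ∧
    (∀ (g : G), ∀ f ∈ orbitA ρ a, φa (ρ.onArr g f) = ρ.onArr g (φa f))

/-- `T` is a transversal of the object orbits. -/
def IsTransversal {G : Type} [Group G] {K : SmallCat} (ρ : CatAction G K)
    (T : Set K.Obj) : Prop :=
  ∀ x : K.Obj, ∃! t, t ∈ T ∧ t ∈ orbitO ρ x

/-- The natural annotation associated with the canonical automorphisms `gT`. -/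
def natAnn {G : Type} [Group G] {K : SmallCat} (ρ : CatAction G K)
    (gT : K.Obj → G) (a : K.Arr) : G :=
  gT (K.tgt a) * (gT (K.src a))⁻¹

/-- `RightNormalWith ρ C` : the map `C` witnesses that `ρ` is right-normal:
in the orbit category, loop orbits can be moved from the left of an arrow orbit
to its right. -/
def RightNormalWith {G : Type} [Group G] {K : SmallCat} (ρ : CatAction G K)
    (C : Quotient (arrSetoid ρ) → Quotient (arrSetoid ρ) → Quotient (arrSetoid ρ)) : Prop :=
  (∀ (a x : K.Arr),
    srcQ ρ (Quotient.mk (arrSetoid ρ) x) = srcQ ρ (Quotient.mk (arrSetoid ρ) a) →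
    tgtQ ρ (Quotient.mk (arrSetoid ρ) x) = srcQ ρ (Quotient.mk (arrSetoid ρ) a) →
    ((srcQ ρ (C (Quotient.mk (arrSetoid ρ) a) (Quotient.mk (arrSetoid ρ) x)) =
        tgtQ ρ (Quotient.mk (arrSetoid ρ) a) ∧
      tgtQ ρ (C (Quotient.mk (arrSetoid ρ) a) (Quotient.mk (arrSetoid ρ) x)) =
        tgtQ ρ (Quotient.mk (arrSetoid ρ) a)) ∧
      (∀ (x' a' : K.Arr) (h1 : K.tgt x' = K.src a'),
        Quotient.mk (arrSetoid ρ) x' = Quotient.mk (arrSetoid ρ) x →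
        Quotient.mk (arrSetoid ρ) a' = Quotient.mk (arrSetoid ρ) a →
        ∀ (a'' c : K.Arr) (h2 : K.tgt a'' = K.src c),
          Quotient.mk (arrSetoid ρ) a'' = Quotient.mk (arrSetoid ρ) a →
          Quotient.mk (arrSetoid ρ) c =
            C (Quotient.mk (arrSetoid ρ) a) (Quotient.mk (arrSetoid ρ) x) →
          Quotient.mk (arrSetoid ρ) (K.comp x' a' h1) =
            Quotient.mk (arrSetoid ρ) (K.comp a'' c h2)))) ∧
  (∀ a : K.Arr,
    C (Quotient.mk (arrSetoid ρ) a) (Quotient.mk (arrSetoid ρ) (K.id (K.src a))) =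
      Quotient.mk (arrSetoid ρ) (K.id (K.tgt a)))

/-- The action `ρ` is right-normal. -/
def RightNormal {G : Type} [Group G] {K : SmallCat} (ρ : CatAction G K) : Prop :=
  ∃ C, RightNormalWith ρ C

/-- An arrow orbit is an identity orbit. -/
def IsIdQ {G : Type} [Group G] {K : SmallCat} (ρ : CatAction G K)
    (α : Quotient (arrSetoid ρ)) : Prop :=
  ∃ x : K.Obj, α = Quotient.mk (arrSetoid ρ) (K.id x)

/-- An arrow of the orbit category is reducible: it is an arrow with the same
endpoints followed by a non-identity loop. -/
def ReducibleQ {G : Type} [Group G] {K : SmallCat} (ρ : CatAction G K)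
    (β : Quotient (arrSetoid ρ)) : Prop :=
  ∃ b l, CompRelQ ρ b l β ∧ tgtQ ρ b = tgtQ ρ β ∧ ¬ IsIdQ ρ l

/-- An arrow of the orbit category is irreducible. -/
def IrreducibleQ {G : Type} [Group G] {K : SmallCat} (ρ : CatAction G K)
    (β : Quotient (arrSetoid ρ)) : Prop :=
  ¬ ReducibleQ ρ β

/-- The orbit category is uniquely representable by irreducible arrows,
with irreducible part `r` and loop part `n`. -/
def UniqRep {G : Type} [Group G] {K : SmallCat} (ρ : CatAction G K)
    (r n : Quotient (arrSetoid ρ) → Quotient (arrSetoid ρ)) : Prop :=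
  (∀ α, IrreducibleQ ρ (r α) ∧ srcQ ρ (r α) = srcQ ρ α ∧ tgtQ ρ (r α) = tgtQ ρ α ∧
    srcQ ρ (n α) = tgtQ ρ α ∧ tgtQ ρ (n α) = tgtQ ρ α ∧ CompRelQ ρ (r α) (n α) α) ∧
  (∀ α b l, CompRelQ ρ b l α → tgtQ ρ b = tgtQ ρ α → srcQ ρ l = tgtQ ρ l →
    IrreducibleQ ρ b → b = r α ∧ l = n α)

/-- A right-groupal category: a small category whose objects form a group which
acts on the category by a left-associative automorphism action, compatible with
right multiplication on the objects. -/
structure RGC where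
  K : SmallCat
  mul : K.Obj → K.Obj → K.Obj
  one : K.Obj
  inv : K.Obj → K.Obj
  mul_assoc : ∀ x y z, mul (mul x y) z = mul x (mul y z)
  one_mul : ∀ x, mul one x = x
  mul_one : ∀ x, mul x one = x
  inv_mul : ∀ x, mul (inv x) x = one
  mul_inv : ∀ x, mul x (inv x) = one
  act : K.Arr → K.Obj → K.Arr
  act_one : ∀ a, act a one = a
  act_mul : ∀ a x y, act (act a x) y = act a (mul x y)
  src_act : ∀ a x, K.src (act a x) = mul (K.src a) x
  tgt_act : ∀ a x, K.tgt (act a x) = mul (K.tgt a) x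
  act_id : ∀ y x, act (K.id y) x = K.id (mul y x)
  act_comp : ∀ a b (h : K.tgt a = K.src b) x,
    act (K.comp a b h) x = K.comp (act a x) (act b x) (by rw [tgt_act, src_act, h])

/-- A groupal category: a right-groupal category together with a commuting
second (left-multiplication style) action satisfying the interchange law. -/
structure GroupalCat extends RGC where
  lact : K.Obj → K.Arr → K.Arr
  lact_one : ∀ a, lact one a = a
  lact_mul : ∀ x y a, lact x (lact y a) = lact (mul x y) a
  src_lact : ∀ x a, K.src (lact x a) = mul x (K.src a)
  tgt_lact : ∀ x a, K.tgt (lact x a) = mul x (K.tgt a)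
  lact_id : ∀ x y, lact x (K.id y) = K.id (mul x y)
  lact_comp : ∀ x a b (h : K.tgt a = K.src b),
    lact x (K.comp a b h) = K.comp (lact x a) (lact x b) (by rw [tgt_lact, src_lact, h])
  lact_act : ∀ x a y, lact x (act a y) = act (lact x a) y
  interchange : ∀ (a b : K.Arr),
    K.comp (act a (K.src b)) (lact (K.tgt a) b) (by rw [tgt_act, src_lact]) =
    K.comp (lact (K.src a) b) (act a (K.tgt b)) (by rw [tgt_lact, src_act])

/-- A po-group `P`, viewed as the simple category with a unique arrow `x → y` iff `x ≤ y`. -/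
def poCat (P : Type) [Group P] [PartialOrder P] : SmallCat where
  Obj := P
  Arr := {p : P × P // p.1 ≤ p.2}
  src p := p.1.1
  tgt p := p.1.2
  id x := ⟨(x, x), le_refl x⟩
  src_id x := rfl
  tgt_id x := rfl
  comp a b h := ⟨(a.1.1, b.1.2), a.2.trans ((show (a.1).2 = (b.1).1 from h).trans_le b.2)⟩
  src_comp a b h := rfl
  tgt_comp a b h := rfl
  id_comp a := rfl
  comp_id a := rfl
  assoc a b c hab hbc := rfl

/-! ### Auxiliary material for Statement 14 -/

section Aux

theorem SmallCat.comp_eq (K : SmallCat) {a a' b b' : K.Arr} (h : K.tgt a = K.src b)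
    (ha : a = a') (hb : b = b') :
    K.comp a b h = K.comp a' b' (by rw [← ha, ← hb]; exact h) := by
  subst ha; subst hb; rfl

variable (R : GroupalCat)

theorem GC.mul_inv_left (u v : R.K.Obj) : R.mul (R.inv u) (R.mul u v) = v := by
  rw [← R.mul_assoc, R.inv_mul, R.one_mul]

theorem GC.mul_left_inv' (u v : R.K.Obj) : R.mul u (R.mul (R.inv u) v) = v := by
  rw [← R.mul_assoc, R.mul_inv, R.one_mul]

theorem GC.mul_right_cancel {a b x : R.K.Obj} (h : R.mul a x = R.mul b x) : a = b := by
  have h2 := congrArg (fun z => R.mul z (R.inv x)) h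
  simpa [R.mul_assoc, R.mul_inv, R.mul_one] using h2

theorem GC.inv_inj {a b : R.K.Obj} (h : R.inv a = R.inv b) : a = b := by
  apply GC.mul_right_cancel R (x := R.inv a)
  rw [R.mul_inv, h, R.mul_inv]

/-- The canonical "commuted loop": given `a` and a loop-ish arrow `x` with
`tgt x = src a`, the arrow `c` with `comp x a ~ comp a c`. -/
def cArr (a x : R.K.Arr) : R.K.Arr :=
  R.act (R.lact (R.mul (R.K.src a) (R.inv (R.K.src x))) x)
    (R.mul (R.inv (R.K.src a)) (R.K.tgt a))

theorem cArr_src (a x : R.K.Arr) : R.K.src (cArr R a x) = R.K.tgt a := by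
  simp [cArr, R.src_act, R.src_lact, R.mul_assoc, GC.mul_inv_left, GC.mul_left_inv']

theorem cArr_comp (a x : R.K.Arr) (h : R.K.tgt x = R.K.src a) :
    R.K.comp a (cArr R a x) (cArr_src R a x).symm =
      R.lact (R.mul (R.K.src a) (R.inv (R.K.src x))) (R.K.comp x a h) := by
  set w := R.mul (R.K.src a) (R.inv (R.K.src x)) with hw
  set X := R.lact w x with hX
  set B := R.lact (R.inv (R.K.src a)) a with hB
  have H := R.interchange X B
  have e1 : R.lact (R.K.src X) B = a := by
    rw [hX, hB, R.src_lact, R.lact_mul, hw]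
    have h1 : R.mul (R.mul (R.mul (R.K.src a) (R.inv (R.K.src x))) (R.K.src x))
        (R.inv (R.K.src a)) = R.one := by
      rw [R.mul_assoc (R.K.src a) (R.inv (R.K.src x)) (R.K.src x), R.inv_mul,
        R.mul_one, R.mul_inv]
    rw [h1, R.lact_one]
  have e2 : R.act X (R.K.tgt B) = cArr R a x := by
    rw [hB, R.tgt_lact, cArr]
  have e3 : R.act X (R.K.src B) = X := by
    rw [hB, R.src_lact, R.inv_mul, R.act_one]
  have e4 : R.lact (R.K.tgt X) B = R.lact w a := by
    rw [hX, hB, R.tgt_lact, R.lact_mul, h,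
      R.mul_assoc w (R.K.src a) (R.inv (R.K.src a)), R.mul_inv, R.mul_one]
  have e5 : R.K.tgt X = R.K.src (R.lact w a) := by
    rw [hX, R.tgt_lact, R.src_lact, h]
  calc R.K.comp a (cArr R a x) (cArr_src R a x).symm
      = R.K.comp (R.lact (R.K.src X) B) (R.act X (R.K.tgt B))
          (by rw [e1, e2, cArr_src]) :=
        R.K.comp_eq _ e1.symm e2.symm
    _ = R.K.comp (R.act X (R.K.src B)) (R.lact (R.K.tgt X) B)
          (by rw [e3, e4]; exact e5) := H.symm
    _ = R.K.comp X (R.lact w a) e5 :=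
        R.K.comp_eq _ e3 e4
    _ = R.lact w (R.K.comp x a h) := (R.lact_comp w x a h).symm

theorem mkArrEq {G : Type} [Group G] {K : SmallCat} (ρ : CatAction G K) {a b : K.Arr}
    (g : G) (h : ρ.onArr g a = b) :
    Quotient.mk (arrSetoid ρ) a = Quotient.mk (arrSetoid ρ) b :=
  Quotient.sound ⟨g, h⟩

theorem mkObjEq {G : Type} [Group G] {K : SmallCat} (ρ : CatAction G K) {a b : K.Obj}
    (g : G) (h : ρ.onObj g a = b) :
    Quotient.mk (objSetoid ρ) a = Quotient.mk (objSetoid ρ) b :=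
  Quotient.sound ⟨g, h⟩

theorem mkArrExact {G : Type} [Group G] {K : SmallCat} (ρ : CatAction G K) {a b : K.Arr}
    (h : Quotient.mk (arrSetoid ρ) a = Quotient.mk (arrSetoid ρ) b) :
    ∃ g : G, ρ.onArr g a = b :=
  Quotient.exact h

theorem mkObjExact {G : Type} [Group G] {K : SmallCat} (ρ : CatAction G K) {a b : K.Obj}
    (h : Quotient.mk (objSetoid ρ) a = Quotient.mk (objSetoid ρ) b) :
    ∃ g : G, ρ.onObj g a = b :=
  Quotient.exact h

/-- The composability condition for a pair of arrow orbits. -/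
def CondP {G : Type} [Group G] {K : SmallCat} (ρ : CatAction G K)
    (α ξ : Quotient (arrSetoid ρ)) : Prop :=
  ∃ p : K.Arr × K.Arr, Quotient.mk (arrSetoid ρ) p.1 = α ∧
    Quotient.mk (arrSetoid ρ) p.2 = ξ ∧ K.tgt p.2 = K.src p.1

open Classical in
/-- The witnessing map `C` for right-normality. -/
noncomputable def Cfun {G : Type} [Group G] (ρ : CatAction G R.K)
    (α ξ : Quotient (arrSetoid ρ)) : Quotient (arrSetoid ρ) :=
  if h : CondP ρ α ξ then Quotient.mk (arrSetoid ρ) (cArr R h.choose.1 h.choose.2) else ξ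

theorem main_groupal {G : Type} [Group G] (e : G → R.K.Obj)
    (he : Function.Injective e)
    (ρ : CatAction G R.K)
    (hO : ∀ (g : G) (x : R.K.Obj), ρ.onObj g x = R.mul (R.inv (e g)) x)
    (hA : ∀ (g : G) (a : R.K.Arr), ρ.onArr g a = R.lact (R.inv (e g)) a) :
    RightNormal ρ := by
  refine ⟨Cfun R ρ, ?_, ?_⟩
  · -- main condition
    intro a x hs ht
    -- produce a composable pair of representatives
    obtain ⟨g0, hg0⟩ := mkObjExact ρ ht
    have hex : CondP ρ (Quotient.mk (arrSetoid ρ) a) (Quotient.mk (arrSetoid ρ) x) := by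
      refine ⟨(a, ρ.onArr g0 x), rfl, (mkArrEq ρ g0 rfl).symm, ?_⟩
      rw [ρ.tgt_onArr]; exact hg0
    have hC : Cfun R ρ (Quotient.mk (arrSetoid ρ) a) (Quotient.mk (arrSetoid ρ) x) =
        Quotient.mk (arrSetoid ρ) (cArr R hex.choose.1 hex.choose.2) := dif_pos hex
    obtain ⟨ha1, hx1, hcmp⟩ := hex.choose_spec
    set A := hex.choose.1 with hAdef
    set X := hex.choose.2 with hXdef
    -- the group element moving src X to src A
    have hsrcQ : Quotient.mk (objSetoid ρ) (R.K.src X) = Quotient.mk (objSetoid ρ) (R.K.src A) := by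
      have c1 : srcQ ρ (Quotient.mk (arrSetoid ρ) X) = srcQ ρ (Quotient.mk (arrSetoid ρ) x) := by
        rw [hx1]
      have c2 : srcQ ρ (Quotient.mk (arrSetoid ρ) a) = srcQ ρ (Quotient.mk (arrSetoid ρ) A) := by
        rw [ha1]
      exact c1.trans (hs.trans c2)
    obtain ⟨k, hk⟩ := mkObjExact ρ hsrcQ
    have hwk : R.mul (R.K.src A) (R.inv (R.K.src X)) = R.inv (e k) := by
      rw [← hk, hO]
      rw [R.mul_assoc, R.mul_inv, R.mul_one]
    have hkey : R.K.comp A (cArr R A X) (cArr_src R A X).symm =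
        ρ.onArr k (R.K.comp X A hcmp) := by
      rw [cArr_comp R A X hcmp, hwk, hA]
    have hcompQ : Quotient.mk (arrSetoid ρ) (R.K.comp X A hcmp) =
        Quotient.mk (arrSetoid ρ) (R.K.comp A (cArr R A X) (cArr_src R A X).symm) :=
      mkArrEq ρ k hkey.symm
    rw [hC]
    constructor
    · constructor
      · -- srcQ of C-value
        show Quotient.mk (objSetoid ρ) (R.K.src (cArr R A X)) =
          tgtQ ρ (Quotient.mk (arrSetoid ρ) a)
        rw [← ha1, cArr_src]
        rfl
      · -- tgtQ of C-value
        show Quotient.mk (objSetoid ρ) (R.K.tgt (cArr R A X)) =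
          tgtQ ρ (Quotient.mk (arrSetoid ρ) a)
        have htc : ρ.onObj k (R.K.tgt A) = R.K.tgt (cArr R A X) := by
          have h5 := congrArg R.K.tgt hkey
          rw [R.K.tgt_comp, ρ.tgt_onArr, R.K.tgt_comp] at h5
          exact h5.symm
        rw [← ha1]
        exact (mkObjEq ρ k htc).symm
    · -- the composite condition
      intro x' a' h1 hx' ha' a'' c h2 ha'' hc
      obtain ⟨g1, hg1⟩ := mkArrExact ρ (hx1.trans hx'.symm)
      obtain ⟨g2, hg2⟩ := mkArrExact ρ (ha1.trans ha'.symm)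
      obtain ⟨g3, hg3⟩ := mkArrExact ρ (ha1.trans ha''.symm)
      obtain ⟨g4, hg4⟩ := mkArrExact ρ hc.symm
      have hcan : ∀ (u v : G) (z : R.K.Obj), ρ.onObj u z = ρ.onObj v z → u = v := by
        intro u v z hz
        rw [hO, hO] at hz
        exact he (GC.inv_inj R (GC.mul_right_cancel R hz))
      have l1 : ρ.onObj g1 (R.K.src A) = R.K.tgt x' := by
        rw [← hcmp, ← ρ.tgt_onArr, hg1]
      have l2 : ρ.onObj g2 (R.K.src A) = R.K.src a' := by
        rw [← ρ.src_onArr, hg2]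
      have l3 : ρ.onObj g3 (R.K.tgt A) = R.K.tgt a'' := by
        rw [← ρ.tgt_onArr, hg3]
      have l4 : ρ.onObj g4 (R.K.tgt A) = R.K.src c := by
        rw [← cArr_src R A X, ← ρ.src_onArr, hg4]
      have hgg : g1 = g2 := by
        apply hcan g1 g2 (R.K.src A)
        rw [l1, l2]; exact h1
      have hgg' : g3 = g4 := by
        apply hcan g3 g4 (R.K.tgt A)
        rw [l3, l4]; exact h2
      have hg2' : ρ.onArr g1 A = a' := by rw [hgg]; exact hg2
      have hg4' : ρ.onArr g3 (cArr R A X) = c := by rw [hgg']; exact hg4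
      have step1 : Quotient.mk (arrSetoid ρ) (R.K.comp x' a' h1) =
          Quotient.mk (arrSetoid ρ) (R.K.comp X A hcmp) := by
        refine (mkArrEq ρ g1 ?_).symm
        rw [ρ.onArr_comp]
        exact R.K.comp_eq _ hg1 hg2'
      have step2 : Quotient.mk (arrSetoid ρ) (R.K.comp a'' c h2) =
          Quotient.mk (arrSetoid ρ)
            (R.K.comp A (cArr R A X) (cArr_src R A X).symm) := by
        refine (mkArrEq ρ g3 ?_).symm
        rw [ρ.onArr_comp]
        exact R.K.comp_eq _ hg3 hg4'
      rw [step1, step2, hcompQ]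
  · -- identity condition
    intro a
    have hex : CondP ρ (Quotient.mk (arrSetoid ρ) a)
        (Quotient.mk (arrSetoid ρ) (R.K.id (R.K.src a))) :=
      ⟨(a, R.K.id (R.K.src a)), rfl, rfl, R.K.tgt_id _⟩
    have hC : Cfun R ρ (Quotient.mk (arrSetoid ρ) a)
        (Quotient.mk (arrSetoid ρ) (R.K.id (R.K.src a))) =
        Quotient.mk (arrSetoid ρ) (cArr R hex.choose.1 hex.choose.2) := dif_pos hex
    obtain ⟨ha1, hx1, hcmp⟩ := hex.choose_spec
    set A := hex.choose.1 with hAdef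
    set X := hex.choose.2 with hXdef
    obtain ⟨g, hg⟩ := mkArrExact ρ hx1.symm
    have hX2 : X = R.K.id (ρ.onObj g (R.K.src a)) := by
      rw [← hg, ρ.onArr_id]
    have hX3 : X = R.K.id (R.K.src A) := by
      have : R.K.tgt X = R.K.src A := hcmp
      rw [hX2, R.K.tgt_id] at this
      rw [hX2, this]
    have hcA : cArr R A X = R.K.id (R.K.tgt A) := by
      rw [hX3]
      simp [cArr, R.K.src_id, R.lact_id, R.act_id, R.mul_inv, R.one_mul,
        GC.mul_left_inv']
    rw [hC, hcA]
    obtain ⟨g', hg'⟩ := mkArrExact ρ ha1.symm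
    refine (mkArrEq ρ g' ?_).symm
    rw [ρ.onArr_id, ← hg', ρ.tgt_onArr]

end Aux

/-- Every subgroup of the object group of a groupal category `R`
(given by an injective group homomorphism `e : G → Ob R`), acting on `R` by the
right-associative action (via left multiplication), is right-normal on the
category. In particular, every subgroup `S` of a po-group `P` acts
right-normally on `P` viewed as a category. -/
theorem subgroup_of_groupal_right_normal :
    (∀ {G : Type} [Group G] (R : GroupalCat) (e : G → R.K.Obj),
      Function.Injective e → (∀ g h : G, e (g * h) = R.mul (e g) (e h)) →
      ∀ ρ : CatAction G R.K,
        (∀ (g : G) (x : R.K.Obj), ρ.onObj g x = R.mul (R.inv (e g)) x) →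
        (∀ (g : G) (a : R.K.Arr), ρ.onArr g a = R.lact (R.inv (e g)) a) →
        RightNormal ρ) ∧
    (∀ (P : Type) [Group P] [PartialOrder P],
      (∀ x y a b : P, a ≤ b ↔ x * a * y ≤ x * b * y) →
      ∀ (S : Subgroup P) (ρ : CatAction S (poCat P)),
        (∀ (s : S) (x : P), ρ.onObj s x = (s : P)⁻¹ * x) →
        (∀ (s : S) (f : (poCat P).Arr),
          (ρ.onArr s f).1 = ((s : P)⁻¹ * f.1.1, (s : P)⁻¹ * f.1.2)) →
        RightNormal ρ) := by
  constructor
  · intro G _ R e he _ ρ hO hA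
    exact main_groupal R e he ρ hO hA
  · intro P _ _ hP S ρ hO hA
    have lmul : ∀ x a b : P, a ≤ b → x * a ≤ x * b := by
      intro x a b h
      have := (hP x 1 a b).mp h
      simpa using this
    have rmul : ∀ y a b : P, a ≤ b → a * y ≤ b * y := by
      intro y a b h
      have := (hP 1 y a b).mp h
      simpa using this
    letI : Group (poCat P).Obj := inferInstanceAs (Group P)
    let R : GroupalCat :=
      { K := poCat P
        mul := fun (x y : P) => x * y
        one := (1 : P)
        inv := fun (x : P) => x⁻¹
        mul_assoc := fun (x y z : P) => mul_assoc x y z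
        one_mul := fun (x : P) => one_mul x
        mul_one := fun (x : P) => mul_one x
        inv_mul := fun (x : P) => inv_mul_cancel x
        mul_inv := fun (x : P) => mul_inv_cancel x
        act := fun a (x : P) => ⟨(a.1.1 * x, a.1.2 * x), rmul x _ _ a.2⟩
        act_one := fun a => Subtype.ext (by simp [Prod.ext_iff])
        act_mul := fun a (x y : P) => Subtype.ext (by simp [Prod.ext_iff, mul_assoc])
        src_act := fun a x => rfl
        tgt_act := fun a x => rfl
        act_id := fun y x => rfl
        act_comp := fun a b h x => rfl
        lact := fun (x : P) a => ⟨(x * a.1.1, x * a.1.2), lmul x _ _ a.2⟩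
        lact_one := fun a => Subtype.ext (by simp [Prod.ext_iff])
        lact_mul := fun (x y : P) a => Subtype.ext (by simp [Prod.ext_iff, mul_assoc])
        src_lact := fun x a => rfl
        tgt_lact := fun x a => rfl
        lact_id := fun x y => rfl
        lact_comp := fun x a b h => rfl
        lact_act := fun (x : P) a (y : P) => Subtype.ext (by simp [Prod.ext_iff, mul_assoc])
        interchange := fun a b => rfl }
    exact main_groupal R (G := S) (fun s => (s : P)) (fun s t h => Subtype.ext h) ρ
      (fun s x => hO s x)
      (fun s f => Subtype.ext (by rw [hA s f]; rfl))
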